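/- Let q ∈ (0,1), λ > 0, and let (ν_n)_{n≥0} be Borel probability measures on ℝ, each supported in (0, ∞), satisfying the one-step scaled recursion ν_{n+1} = m_λ_*(T_q ν_n) for all n, where m_λ(x) := λ·x. If ν_n converges weakly to the Dirac mass δ_c at a constant c ≥ 0, then c = 0. -/

import Mathlib

open MeasureTheory ProbabilityTheory Filter

noncomputable def Sfun : ℝ × ℝ → ℝ := fun p => p.1 + p.2

noncomputable def Dfun : ℝ × ℝ × ℝ × ℝ → ℝ := fun p =>
  ((p.1 + p.2.1) * (p.2.2.1 + p.2.2.2)) / (p.1 + p.2.1 + p.2.2.1 + p.2.2.2)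

/-- One-step resistance recursion map on Borel measures on ℝ. -/
noncomputable def Tq (q : ℝ) (μ : Measure ℝ) : Measure ℝ :=
  ENNReal.ofReal (1 - q) • Measure.map Sfun (μ.prod μ) +
    ENNReal.ofReal q • Measure.map Dfun (μ.prod (μ.prod (μ.prod μ)))

/-- μₙ = T_qⁿ δ₁ : law of the two-terminal resistance after n replacement steps. -/
noncomputable def mu (q : ℝ) (n : ℕ) : Measure ℝ := (Tq q)^[n] (Measure.dirac 1)

/-! ### Auxiliary lemmas -/

lemma Sfun_meas : Measurable Sfun := by unfold Sfun; fun_prop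

lemma Dfun_meas : Measurable Dfun := by unfold Dfun; fun_prop

lemma Tq_apply (q : ℝ) (μ : Measure ℝ) (A : Set ℝ) (hA : MeasurableSet A) :
    Tq q μ A = ENNReal.ofReal (1 - q) * (μ.prod μ) (Sfun ⁻¹' A)
      + ENNReal.ofReal q * (μ.prod (μ.prod (μ.prod μ))) (Dfun ⁻¹' A) := by
  rw [Tq, Measure.add_apply, Measure.smul_apply, Measure.smul_apply,
    Measure.map_apply Sfun_meas hA, Measure.map_apply Dfun_meas hA, smul_eq_mul, smul_eq_mul]

noncomputable def bump (s : Set ℝ) (d : ℝ) (hd : 0 < d) : BoundedContinuousFunction ℝ ℝ :=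
  BoundedContinuousFunction.mkOfBound
    ⟨fun x => max 0 (1 - Metric.infDist x s / d), by
      exact continuous_const.max (continuous_const.sub
        ((Metric.continuous_infDist_pt s).div_const d))⟩ 1
    (by
      intro x y
      have h1 : ∀ z : ℝ, 0 ≤ max 0 (1 - Metric.infDist z s / d) := fun z => le_max_left _ _
      have h2 : ∀ z : ℝ, max 0 (1 - Metric.infDist z s / d) ≤ 1 := by
        intro z
        refine max_le zero_le_one ?_
        have : 0 ≤ Metric.infDist z s / d := div_nonneg Metric.infDist_nonneg hd.le
        linarith
      simp only [ContinuousMap.coe_mk, Real.dist_eq, abs_sub_le_iff]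
      constructor <;> linarith [h1 x, h1 y, h2 x, h2 y])

lemma bump_apply (s : Set ℝ) (d : ℝ) (hd : 0 < d) (x : ℝ) :
    bump s d hd x = max 0 (1 - Metric.infDist x s / d) := rfl

lemma bump_nonneg (s : Set ℝ) (d : ℝ) (hd : 0 < d) (x : ℝ) : 0 ≤ bump s d hd x :=
  le_max_left _ _

lemma bump_le_one (s : Set ℝ) (d : ℝ) (hd : 0 < d) (x : ℝ) : bump s d hd x ≤ 1 := by
  rw [bump_apply]
  refine max_le zero_le_one ?_
  have : 0 ≤ Metric.infDist x s / d := div_nonneg Metric.infDist_nonneg hd.le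
  linarith

lemma bump_eq_one (s : Set ℝ) (d : ℝ) (hd : 0 < d) {x : ℝ} (hx : x ∈ s) :
    bump s d hd x = 1 := by
  rw [bump_apply, Metric.infDist_zero_of_mem hx]
  simp

lemma bump_eq_zero (s : Set ℝ) (d : ℝ) (hd : 0 < d) {x : ℝ} (hx : d ≤ Metric.infDist x s) :
    bump s d hd x = 0 := by
  rw [bump_apply, max_eq_left]
  have : 1 ≤ Metric.infDist x s / d := (one_le_div hd).mpr hx
  linarith

lemma int_le_meas (μ : Measure ℝ) [IsProbabilityMeasure μ] {A : Set ℝ}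
    (hA : MeasurableSet A) (f : BoundedContinuousFunction ℝ ℝ)
    (h1 : ∀ x, f x ≤ 1) (hz : ∀ x ∉ A, f x = 0) :
    ∫ x, f x ∂μ ≤ (μ A).toReal := by
  have h : ∫ x, f x ∂μ ≤ ∫ x, A.indicator (fun _ => (1:ℝ)) x ∂μ := by
    refine integral_mono (f.integrable μ) ((integrable_const (1:ℝ)).indicator hA) ?_
    intro x
    by_cases hx : x ∈ A
    · simp [Set.indicator_of_mem hx, h1 x]
    · simp [Set.indicator_of_notMem hx, (hz x hx).le]
  rw [integral_indicator_const (1:ℝ) hA] at h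
  simpa [Measure.real] using h

lemma meas_le_int (μ : Measure ℝ) [IsProbabilityMeasure μ] {A : Set ℝ}
    (hA : MeasurableSet A) (g : BoundedContinuousFunction ℝ ℝ)
    (h0 : ∀ x, 0 ≤ g x) (h1 : ∀ x ∈ A, 1 ≤ g x) :
    (μ A).toReal ≤ ∫ x, g x ∂μ := by
  have h : ∫ x, A.indicator (fun _ => (1:ℝ)) x ∂μ ≤ ∫ x, g x ∂μ := by
    refine integral_mono ((integrable_const (1:ℝ)).indicator hA) (g.integrable μ) ?_
    intro x
    by_cases hx : x ∈ A
    · simp [Set.indicator_of_mem hx, h1 x hx]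
    · simp [Set.indicator_of_notMem hx, h0 x]
  rw [integral_indicator_const (1:ℝ) hA] at h
  simpa [Measure.real] using h

lemma preimage_mul_Icc (l a b : ℝ) (hl : 0 < l) :
    (fun x => l * x) ⁻¹' Set.Icc (l * a) (l * b) = Set.Icc a b := by
  ext x
  simp [Set.mem_Icc, mul_le_mul_iff_right₀ hl]

lemma Ssub (c : ℝ) :
    Metric.ball c (c/10) ×ˢ Metric.ball c (c/10) ⊆ Sfun ⁻¹' Set.Icc (9/5*c) (11/5*c) := by
  rintro ⟨x, y⟩ ⟨hx, hy⟩
  simp only [Metric.mem_ball, Real.dist_eq] at hx hy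
  have hx' := abs_lt.mp hx
  have hy' := abs_lt.mp hy
  simp only [Set.mem_preimage, Sfun, Set.mem_Icc]
  constructor <;> [linarith [hx'.1, hy'.1]; linarith [hx'.2, hy'.2]]

lemma Dsub (c : ℝ) (hc : 0 < c) :
    Metric.ball c (c/10) ×ˢ (Metric.ball c (c/10) ×ˢ (Metric.ball c (c/10) ×ˢ Metric.ball c (c/10)))
      ⊆ Dfun ⁻¹' Set.Icc (7/10*c) (7/5*c) := by
  rintro ⟨x1, x2, x3, x4⟩ ⟨h1, h2, h3, h4⟩
  simp only [Metric.mem_ball, Real.dist_eq] at h1 h2 h3 h4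
  have h1' := abs_lt.mp h1
  have h2' := abs_lt.mp h2
  have h3' := abs_lt.mp h3
  have h4' := abs_lt.mp h4
  simp only [Set.mem_preimage, Dfun, Set.mem_Icc]
  set a := x1 + x2 with ha
  set b := x3 + x4 with hb
  have haL : 9/5*c ≤ a := by simp only [ha]; linarith [h1'.1, h2'.1]
  have haU : a ≤ 11/5*c := by simp only [ha]; linarith [h1'.2, h2'.2]
  have hbL : 9/5*c ≤ b := by simp only [hb]; linarith [h3'.1, h4'.1]
  have hbU : b ≤ 11/5*c := by simp only [hb]; linarith [h3'.2, h4'.2]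
  have habe : x1 + x2 + x3 + x4 = a + b := by ring
  rw [show (x1 + x2) * (x3 + x4) = a * b from rfl, habe]
  constructor
  · rw [le_div_iff₀ (by linarith)]
    nlinarith [mul_nonneg (by linarith : (0:ℝ) ≤ a - 9/5*c) (by linarith : (0:ℝ) ≤ b - 7/10*c)]
  · rw [div_le_iff₀ (by linarith)]
    nlinarith [mul_nonneg (by linarith : (0:ℝ) ≤ 11/5*c - a) (by linarith : (0:ℝ) ≤ b)]

lemma step_bound_S (q l c : ℝ) (hq : q < 1) (hl : 0 < l) (μ : Measure ℝ)
    [IsProbabilityMeasure μ]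
    (hμ : ENNReal.ofReal (3/4) ≤ μ (Metric.ball c (c/10))) :
    ENNReal.ofReal ((1-q) * (3/4)^2) ≤
      Measure.map (fun x => l * x) (Tq q μ) (Set.Icc (l*(9/5*c)) (l*(11/5*c))) := by
  rw [Measure.map_apply (measurable_const_mul l) measurableSet_Icc,
    preimage_mul_Icc l _ _ hl, Tq_apply _ _ _ measurableSet_Icc]
  refine le_trans ?_ (le_add_right le_rfl)
  calc ENNReal.ofReal ((1-q) * (3/4)^2)
      = ENNReal.ofReal (1-q) * (ENNReal.ofReal (3/4))^2 := by
        rw [ENNReal.ofReal_mul (by linarith), ENNReal.ofReal_pow (by norm_num)]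
    _ ≤ ENNReal.ofReal (1-q) * (μ.prod μ) (Sfun ⁻¹' Set.Icc (9/5*c) (11/5*c)) := by
        refine mul_le_mul' le_rfl ?_
        calc (ENNReal.ofReal (3/4))^2
            ≤ μ (Metric.ball c (c/10)) * μ (Metric.ball c (c/10)) := by
              rw [sq]; exact mul_le_mul' hμ hμ
          _ = (μ.prod μ) (Metric.ball c (c/10) ×ˢ Metric.ball c (c/10)) :=
              (Measure.prod_prod _ _).symm
          _ ≤ _ := measure_mono (Ssub c)

lemma step_bound_D (q l c : ℝ) (hq : 0 ≤ q) (hl : 0 < l) (hc : 0 < c) (μ : Measure ℝ)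
    [IsProbabilityMeasure μ]
    (hμ : ENNReal.ofReal (3/4) ≤ μ (Metric.ball c (c/10))) :
    ENNReal.ofReal (q * (3/4)^4) ≤
      Measure.map (fun x => l * x) (Tq q μ) (Set.Icc (l*(7/10*c)) (l*(7/5*c))) := by
  rw [Measure.map_apply (measurable_const_mul l) measurableSet_Icc,
    preimage_mul_Icc l _ _ hl, Tq_apply _ _ _ measurableSet_Icc]
  refine le_trans ?_ (le_add_left le_rfl)
  set B := Metric.ball c (c/10)
  calc ENNReal.ofReal (q * (3/4)^4)
      = ENNReal.ofReal q * (ENNReal.ofReal (3/4))^4 := by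
        rw [ENNReal.ofReal_mul hq, ENNReal.ofReal_pow (by norm_num)]
    _ ≤ ENNReal.ofReal q *
        (μ.prod (μ.prod (μ.prod μ))) (Dfun ⁻¹' Set.Icc (7/10*c) (7/5*c)) := by
        refine mul_le_mul' le_rfl ?_
        calc (ENNReal.ofReal (3/4))^4
            = (ENNReal.ofReal (3/4)) * ((ENNReal.ofReal (3/4)) *
                ((ENNReal.ofReal (3/4)) * (ENNReal.ofReal (3/4)))) := by ring
          _ ≤ μ B * (μ B * (μ B * μ B)) :=
              mul_le_mul' hμ (mul_le_mul' hμ (mul_le_mul' hμ hμ))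
          _ = (μ.prod (μ.prod (μ.prod μ))) (B ×ˢ (B ×ˢ (B ×ˢ B))) := by
              rw [Measure.prod_prod, Measure.prod_prod, Measure.prod_prod]
          _ ≤ _ := measure_mono (Dsub c hc)

lemma contra_of_mass (ν : ℕ → Measure ℝ) (hprob : ∀ n, IsProbabilityMeasure (ν n)) (c : ℝ)
    (hconv : ∀ f : BoundedContinuousFunction ℝ ℝ,
      Tendsto (fun n : ℕ => ∫ x, f x ∂(ν n)) atTop (nhds (f c)))
    (a b w : ℝ) (hab : a ≤ b) (hcJ : c ∉ Set.Icc a b) (hw : 0 < w)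
    (hm : ∀ᶠ n in atTop, ENNReal.ofReal w ≤ ν n (Set.Icc a b)) : False := by
  have hne : (Set.Icc a b).Nonempty := Set.nonempty_Icc.mpr hab
  have hd : 0 < Metric.infDist c (Set.Icc a b) :=
    (isClosed_Icc.notMem_iff_infDist_pos hne).mp hcJ
  set g := bump (Set.Icc a b) _ hd with hg
  have hgc : g c = 0 := bump_eq_zero _ _ _ le_rfl
  have htend := hconv g
  rw [hgc] at htend
  have hev : ∀ᶠ n in atTop, w ≤ ∫ x, g x ∂(ν n) := by
    filter_upwards [hm] with n hn
    haveI := hprob n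
    have h1 : w ≤ (ν n (Set.Icc a b)).toReal := by
      have := ENNReal.toReal_mono (measure_ne_top _ _) hn
      rwa [ENNReal.toReal_ofReal hw.le] at this
    refine h1.trans (meas_le_int (ν n) measurableSet_Icc g (bump_nonneg _ _ _) ?_)
    intro x hx
    rw [bump_eq_one _ _ _ hx]
  have : w ≤ 0 := ge_of_tendsto htend hev
  linarith

lemma concentration (ν : ℕ → Measure ℝ) (hprob : ∀ n, IsProbabilityMeasure (ν n)) (c : ℝ)
    (hc : 0 < c)
    (hconv : ∀ f : BoundedContinuousFunction ℝ ℝ,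
      Tendsto (fun n : ℕ => ∫ x, f x ∂(ν n)) atTop (nhds (f c))) :
    ∀ᶠ n in atTop, ENNReal.ofReal (3/4) ≤ ν n (Metric.ball c (c/10)) := by
  have hd : 0 < c/10 := by linarith
  set f := bump {c} _ hd with hf
  have hfc : f c = 1 := bump_eq_one _ _ _ rfl
  have htend := hconv f
  rw [hfc] at htend
  have hev : ∀ᶠ n in atTop, (3/4 : ℝ) ≤ ∫ x, f x ∂(ν n) :=
    htend.eventually (eventually_ge_nhds (by norm_num))
  filter_upwards [hev] with n hn
  haveI := hprob n
  have h2 : ∫ x, f x ∂(ν n) ≤ (ν n (Metric.ball c (c/10))).toReal := by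
    refine int_le_meas (ν n) Metric.isOpen_ball.measurableSet f (bump_le_one _ _ _) ?_
    intro x hx
    refine bump_eq_zero _ _ _ ?_
    rw [Metric.infDist_singleton]
    exact not_lt.mp (fun h => hx (Metric.mem_ball.mpr h))
  exact ENNReal.ofReal_le_of_le_toReal (hn.trans h2)

theorem stmt4 (q l : ℝ) (hq : q ∈ Set.Ioo (0 : ℝ) 1) (hl : 0 < l)
    (ν : ℕ → Measure ℝ) (hprob : ∀ n, IsProbabilityMeasure (ν n))
    (hsupp : ∀ n, ν n (Set.Ioi (0 : ℝ))ᶜ = 0)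
    (hrec : ∀ n, ν (n + 1) = Measure.map (fun x => l * x) (Tq q (ν n)))
    (c : ℝ) (hc : 0 ≤ c)
    (hconv : ∀ f : BoundedContinuousFunction ℝ ℝ,
      Tendsto (fun n : ℕ => ∫ x, f x ∂(ν n)) atTop (nhds (f c))) :
    c = 0 := by
  by_contra hc0
  have hcpos : 0 < c := lt_of_le_of_ne hc (Ne.symm hc0)
  have hconc := concentration ν hprob c hcpos hconv
  obtain ⟨N, hN⟩ := eventually_atTop.mp hconc
  by_cases hcase : c ∈ Set.Icc (l*(9/5*c)) (l*(11/5*c))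
  · -- c is in the S-interval, so it is not in the D-interval
    have hcD : c ∉ Set.Icc (l*(7/10*c)) (l*(7/5*c)) := by
      intro hmem
      have h1 := hcase.1
      have h2 := hmem.2
      nlinarith
    refine contra_of_mass ν hprob c hconv (l*(7/10*c)) (l*(7/5*c)) (q * (3/4)^4)
      (by nlinarith) hcD (by nlinarith [hq.1]) ?_
    refine eventually_atTop.mpr ⟨N + 1, fun n hn => ?_⟩
    obtain ⟨m, rfl⟩ : ∃ m, n = m + 1 := ⟨n - 1, by omega⟩
    haveI := hprob m
    rw [hrec m]
    exact step_bound_D q l c hq.1.le hl hcpos (ν m) (hN m (by omega))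
  · refine contra_of_mass ν hprob c hconv (l*(9/5*c)) (l*(11/5*c)) ((1-q) * (3/4)^2)
      (by nlinarith) hcase (by nlinarith [hq.2]) ?_
    refine eventually_atTop.mpr ⟨N + 1, fun n hn => ?_⟩
    obtain ⟨m, rfl⟩ : ∃ m, n = m + 1 := ⟨n - 1, by omega⟩
    haveI := hprob m
    rw [hrec m]
    exact step_bound_S q l c hq.2 hl (ν m) (hN m (by omega))
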